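/- For a partition p = (p_1 ≥ p_2 ≥ ... ≥ p_m ≥ 0) with p_1 ≤ m and all positive entries distinct, and ℓ = (m, m-1, ..., 2, 1), the multiset of entries of ℓ - p (coordinatewise difference) equals the multiset of entries of ℓ - p^t, where p^t is the conjugate (transpose) partition of p padded to length m. Equivalently: sorting the vector ℓ - p in weakly decreasing order yields exactly the vector ℓ - p^t. -/
import Mathlib

/-- Key lemma: for any weakly decreasing `μ : Fin m → ℕ` bounded by `m`,
the multiset `{i + μ i}` equals the multiset `{i + μᵗ i}`, where
`μᵗ i = #{j : μ j ≥ i + 1}`. Proved by induction on `∑ μ`, removing one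
corner box at a time. -/
theorem stmt_3_key (m : ℕ) : ∀ (n : ℕ) (μ : Fin m → ℕ),
    (∑ i, μ i) = n →
    (∀ i j : Fin m, i ≤ j → μ j ≤ μ i) →
    (∀ i : Fin m, μ i ≤ m) →
    Multiset.map (fun i : Fin m => i.val + μ i) Finset.univ.val =
    Multiset.map (fun i : Fin m =>
      i.val + (Finset.univ.filter (fun j : Fin m => i.val + 1 ≤ μ j)).card)
      Finset.univ.val := by
  intro n
  induction n using Nat.strong_induction_on with
  | _ n ih =>
    intro μ hsum hdec hbound
    by_cases h0 : ∀ i, μ i = 0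
    · apply Multiset.map_congr rfl
      intro i _
      have : Finset.univ.filter (fun j : Fin m => i.val + 1 ≤ μ j) = ∅ := by
        apply Finset.filter_false_of_mem
        intro j _
        simp [h0 j]
      rw [this]
      simp [h0 i]
    · push_neg at h0
      -- pick the last nonzero row i₀
      have hne : (Finset.univ.filter (fun j : Fin m => 0 < μ j)).Nonempty := by
        obtain ⟨i, hi⟩ := h0
        exact ⟨i, by simp [Nat.pos_of_ne_zero hi]⟩
      set i₀ : Fin m := (Finset.univ.filter (fun j : Fin m => 0 < μ j)).max' hne with hi₀def
      have hi₀pos : 0 < μ i₀ := by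
        have := Finset.max'_mem _ hne
        rw [← hi₀def] at this
        simpa using this
      have hi₀max : ∀ j : Fin m, 0 < μ j → j ≤ i₀ := by
        intro j hj
        exact Finset.le_max' _ j (by simpa using hj)
      set K := μ i₀ with hKdef
      have hK1 : 1 ≤ K := hi₀pos
      have hKm : K ≤ m := hbound i₀
      -- the corner column
      set c₀ : Fin m := ⟨K - 1, by omega⟩ with hc₀def
      -- rows beyond i₀ are zero
      have hzero : ∀ j : Fin m, ¬ j ≤ i₀ → μ j = 0 := by
        intro j hj
        by_contra h
        exact hj (hi₀max j (Nat.pos_of_ne_zero h))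
      -- the new partition with the corner removed
      set μ' : Fin m → ℕ := Function.update μ i₀ (K - 1) with hμ'def
      have hμ'i₀ : μ' i₀ = K - 1 := by simp [hμ'def]
      have hμ'ne : ∀ j, j ≠ i₀ → μ' j = μ j := by
        intro j hj; simp [hμ'def, Function.update_of_ne hj]
      have hdec' : ∀ i j : Fin m, i ≤ j → μ' j ≤ μ' i := by
        intro i j hij
        by_cases hi : i = i₀ <;> by_cases hj : j = i₀
        · subst hi; subst hj; exact le_refl _
        · subst hi
          rw [hμ'i₀, hμ'ne j hj]
          have : ¬ j ≤ i₀ := by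
            intro h
            exact hj (le_antisymm h hij)
          rw [hzero j this]; omega
        · subst hj
          rw [hμ'i₀, hμ'ne i hi]
          have := hdec i i₀ hij
          omega
        · rw [hμ'ne i hi, hμ'ne j hj]; exact hdec i j hij
      have hbound' : ∀ i : Fin m, μ' i ≤ m := by
        intro i
        by_cases hi : i = i₀
        · subst hi; rw [hμ'i₀]; omega
        · rw [hμ'ne i hi]; exact hbound i
      have hsum' : (∑ i, μ' i) < n := by
        have h1 : (∑ i, μ' i) = (K - 1) + ∑ i ∈ Finset.univ.erase i₀, μ i := by
          rw [hμ'def, Finset.sum_update_of_mem (Finset.mem_univ i₀)]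
          rw [Finset.sdiff_singleton_eq_erase]
        have h2 : (∑ i, μ i) = K + ∑ i ∈ Finset.univ.erase i₀, μ i := by
          rw [← Finset.add_sum_erase _ μ (Finset.mem_univ i₀)]
        omega
      have IH := ih _ hsum' μ' rfl hdec' hbound'
      -- compare the two sides for μ and μ'
      set G : Fin m → ℕ := fun i : Fin m =>
        i.val + (Finset.univ.filter (fun j : Fin m => i.val + 1 ≤ μ j)).card with hGdef
      set G' : Fin m → ℕ := fun i : Fin m =>
        i.val + (Finset.univ.filter (fun j : Fin m => i.val + 1 ≤ μ' j)).card with hG'def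
      -- the filter at column c₀ for μ is Iic i₀
      have hcardA : (Finset.univ.filter (fun j : Fin m => c₀.val + 1 ≤ μ j)).card
          = i₀.val + 1 := by
        have : Finset.univ.filter (fun j : Fin m => c₀.val + 1 ≤ μ j) = Finset.Iic i₀ := by
          ext j
          simp only [Finset.mem_filter, Finset.mem_univ, true_and, Finset.mem_Iic]
          constructor
          · intro h
            apply hi₀max
            have : c₀.val + 1 = K := by simp [hc₀def]; omega
            omega
          · intro h
            have := hdec j i₀ h
            have : K ≤ μ j := by omega
            simp [hc₀def]; omega
        rw [this, Fin.card_Iic]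
      have hcardB : (Finset.univ.filter (fun j : Fin m => c₀.val + 1 ≤ μ' j)).card
          = i₀.val := by
        have : Finset.univ.filter (fun j : Fin m => c₀.val + 1 ≤ μ' j) = Finset.Iio i₀ := by
          ext j
          simp only [Finset.mem_filter, Finset.mem_univ, true_and, Finset.mem_Iio]
          have hc : c₀.val + 1 = K := by simp [hc₀def]; omega
          constructor
          · intro h
            by_cases hj : j = i₀
            · exfalso; rw [hj, hμ'i₀] at h; omega
            · rw [hμ'ne j hj] at h
              have hle : j ≤ i₀ := hi₀max j (by omega)
              exact lt_of_le_of_ne hle hj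
          · intro h
            have hj : j ≠ i₀ := ne_of_lt h
            rw [hμ'ne j hj]
            have := hdec j i₀ (le_of_lt h)
            omega
        rw [this, Fin.card_Iio]
      -- G and G' agree away from c₀
      have hGagree : ∀ c : Fin m, c ≠ c₀ → G c = G' c := by
        intro c hc
        have hcval : c.val ≠ K - 1 := by
          intro h
          exact hc (Fin.ext (by simp [hc₀def, h]))
        simp only [hGdef, hG'def]
        congr 1
        apply Finset.card_bij (fun a _ => a)
        · intro a ha
          simp only [Finset.mem_filter, Finset.mem_univ, true_and] at ha ⊢
          by_cases haa : a = i₀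
          · subst haa; rw [hμ'i₀]; rw [← hKdef] at ha; omega
          · rw [hμ'ne a haa]; exact ha
        · intro a b _ _ h; exact h
        · intro b hb
          refine ⟨b, ?_, rfl⟩
          simp only [Finset.mem_filter, Finset.mem_univ, true_and] at hb ⊢
          by_cases hbb : b = i₀
          · subst hbb; rw [hμ'i₀] at hb; rw [← hKdef]; omega
          · rw [hμ'ne b hbb] at hb; exact hb
      -- decompose the multisets
      have euniv_i : Finset.univ.val = i₀ ::ₘ Finset.univ.val.erase i₀ :=
        (Multiset.cons_erase (by simp)).symm
      have euniv_c : Finset.univ.val = c₀ ::ₘ Finset.univ.val.erase c₀ :=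
        (Multiset.cons_erase (by simp)).symm
      have hnodup : (Finset.univ.val : Multiset (Fin m)).Nodup := Finset.univ.nodup
      have hmemne_i : ∀ x : Fin m, x ∈ Finset.univ.val.erase i₀ → x ≠ i₀ := by
        intro x hx
        exact (Multiset.Nodup.mem_erase_iff hnodup).mp hx |>.1
      have hmemne_c : ∀ x : Fin m, x ∈ Finset.univ.val.erase c₀ → x ≠ c₀ := by
        intro x hx
        exact (Multiset.Nodup.mem_erase_iff hnodup).mp hx |>.1
      -- rewrite LHS sides
      have eL : Multiset.map (fun i : Fin m => i.val + μ i) Finset.univ.val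
          = (i₀.val + K) ::ₘ Multiset.map (fun i : Fin m => i.val + μ' i)
              (Finset.univ.val.erase i₀) := by
        conv_lhs => rw [euniv_i]
        rw [Multiset.map_cons]
        congr 1
        apply Multiset.map_congr rfl
        intro x hx
        rw [hμ'ne x (hmemne_i x hx)]
      have eL' : Multiset.map (fun i : Fin m => i.val + μ' i) Finset.univ.val
          = (i₀.val + (K - 1)) ::ₘ Multiset.map (fun i : Fin m => i.val + μ' i)
              (Finset.univ.val.erase i₀) := by
        conv_lhs => rw [euniv_i]
        rw [Multiset.map_cons, hμ'i₀]
      have eR : Multiset.map G Finset.univ.val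
          = (i₀.val + K) ::ₘ Multiset.map G' (Finset.univ.val.erase c₀) := by
        conv_lhs => rw [euniv_c]
        rw [Multiset.map_cons]
        have hc₀val : c₀.val = K - 1 := rfl
        have : G c₀ = i₀.val + K := by
          simp only [hGdef]
          rw [hcardA]
          omega
        rw [this]
        congr 1
        apply Multiset.map_congr rfl
        intro x hx
        exact hGagree x (hmemne_c x hx)
      have eR' : Multiset.map G' Finset.univ.val
          = (i₀.val + (K - 1)) ::ₘ Multiset.map G' (Finset.univ.val.erase c₀) := by
        conv_lhs => rw [euniv_c]
        rw [Multiset.map_cons]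
        have hc₀val : c₀.val = K - 1 := rfl
        have : G' c₀ = i₀.val + (K - 1) := by
          simp only [hG'def]
          rw [hcardB]
          omega
        rw [this]
      -- combine
      rw [eL, eR]
      congr 1
      have : (i₀.val + (K - 1)) ::ₘ Multiset.map (fun i : Fin m => i.val + μ' i)
          (Finset.univ.val.erase i₀)
          = (i₀.val + (K - 1)) ::ₘ Multiset.map G' (Finset.univ.val.erase c₀) := by
        rw [← eL', ← eR']
        exact IH
      exact (Multiset.cons_inj_right _).mp this

/-- For a weakly decreasing `p : Fin m → ℕ` with `p 0 ≤ m` and all positive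
entries pairwise distinct, and the staircase `ℓ i = m - i` (0-indexed, so
`ℓ = (m, m-1, …, 1)`), the multiset of entries of `ℓ - p` equals the multiset
of entries of `ℓ - pᵗ`, where `pᵗ i = #{j : p j ≥ i + 1}` is the conjugate
partition padded to length `m`. -/
theorem stmt_3 (m : ℕ) (p : Fin m → ℕ)
    (hdec : ∀ i j : Fin m, i ≤ j → p j ≤ p i)
    (hbound : ∀ i : Fin m, p i ≤ m)
    (hdist : ∀ i j : Fin m, i ≠ j → 0 < p i → 0 < p j → p i ≠ p j) :
    Multiset.map (fun i : Fin m => (m - i.val) - p i) Finset.univ.val =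
    Multiset.map (fun i : Fin m =>
      (m - i.val) - (Finset.univ.filter (fun j : Fin m => i.val + 1 ≤ p j)).card)
      Finset.univ.val := by
  have key := stmt_3_key m (∑ i, p i) p rfl hdec hbound
  have hrw : ∀ (f : Fin m → ℕ),
      Multiset.map (fun i : Fin m => (m - i.val) - f i) Finset.univ.val
      = Multiset.map (fun x => m - x)
          (Multiset.map (fun i : Fin m => i.val + f i) Finset.univ.val) := by
    intro f
    rw [Multiset.map_map]
    apply Multiset.map_congr rfl
    intro x _
    simp only [Function.comp_apply]
    omega
  rw [hrw p, hrw (fun i : Fin m =>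
    (Finset.univ.filter (fun j : Fin m => i.val + 1 ≤ p j)).card), key]
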